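/- arXiv:math/9807024 — 2 statements merged into one kernel-verified Lean document; each statement's English description precedes it below -/
import Mathlib

section
/- The RP integral extends the Lebesgue integral: Let E be a finite-dimensional real normed vector space and let f : [0,1]^n → E be Lebesgue (Bochner) integrable with respect to Lebesgue measure on [0,1]^n. Then the Lebesgue integral ∫_{[0,1]^n} f is the RP integral of f over [0,1]^n. -/
open MeasureTheory

noncomputable section

/-- The closed axis-parallel cube with corner `a` and side length `w`. -/
def cube {n : ℕ} (a : Fin n → ℝ) (w : ℝ) : Set (Fin n → ℝ) :=
  Set.Icc a (fun i => a i + w)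

/-- A tagged RP partition of `[0,1]^n` into `k` closed axis-parallel cubes
`cube (a j) (w j)` with tags `t j`: the cubes are nondegenerate, have pairwise disjoint
interiors and union `[0,1]^n`, and `t j ∈ cube (a j) (w j)`. -/
def IsRPPartition {n : ℕ} (k : ℕ) (a : Fin k → Fin n → ℝ) (w : Fin k → ℝ)
    (t : Fin k → Fin n → ℝ) : Prop :=
  (∀ j, 0 < w j) ∧ (∀ j, t j ∈ cube (a j) (w j)) ∧
    (∀ j j', j ≠ j' →
      interior (cube (a j) (w j)) ∩ interior (cube (a j') (w j')) = ∅) ∧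
    (⋃ j, cube (a j) (w j)) = Set.Icc 0 1

/-- `I` is the RP integral of `f` over `[0,1]^n`: for every `ε > 0` there is a gauge `δ`
(positive on `[0,1]^n`) such that every `δ`-fine tagged RP partition (`diam (c j) = w j ≤ δ (t j)`)
has Riemann sum (`vol (c j) = (w j)^n`) within `ε` of `I`. -/
def HasRPIntegral {n : ℕ} {E : Type*} [NormedAddCommGroup E] [NormedSpace ℝ E]
    (f : (Fin n → ℝ) → E) (I : E) : Prop :=
  ∀ ε > (0 : ℝ), ∃ δ : (Fin n → ℝ) → ℝ, (∀ x ∈ Set.Icc (0 : Fin n → ℝ) 1, 0 < δ x) ∧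
    ∀ (k : ℕ) (a : Fin k → Fin n → ℝ) (w : Fin k → ℝ) (t : Fin k → Fin n → ℝ),
      IsRPPartition k a w t → (∀ j, w j ≤ δ (t j)) →
      ‖I - ∑ j : Fin k, (w j) ^ n • f (t j)‖ ≤ ε

/-- **The RP integral extends the Lebesgue integral**: if `f : [0,1]^n → E` is Lebesgue
(Bochner) integrable with respect to Lebesgue measure on `[0,1]^n`, then its Lebesgue
integral is the RP integral of `f` over `[0,1]^n`. -/
theorem rp_extends_lebesgue
    {n : ℕ} {E : Type*} [NormedAddCommGroup E] [NormedSpace ℝ E] [FiniteDimensional ℝ E]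
    (f : (Fin n → ℝ) → E) (hf : IntegrableOn f (Set.Icc 0 1) volume) :
HasRPIntegral f (∫ x in Set.Icc (0 : Fin n → ℝ) 1, f x) := by
  classical
  intro ε hε
  set I₀ : BoxIntegral.Box (Fin n) := ⟨0, 1, fun i => zero_lt_one⟩ with hI₀def
  have hIccI₀ : BoxIntegral.Box.Icc I₀ = Set.Icc (0 : Fin n → ℝ) 1 := rfl
  have hcoe : (I₀ : Set (Fin n → ℝ)) =ᵐ[volume] Set.Icc (0 : Fin n → ℝ) 1 := by
    rw [BoxIntegral.Box.coe_eq_pi, volume_pi]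
    exact MeasureTheory.Measure.univ_pi_Ioc_ae_eq_Icc
  have hcoe_sub : (I₀ : Set (Fin n → ℝ)) ⊆ Set.Icc (0 : Fin n → ℝ) 1 := by
    rw [← hIccI₀]; exact BoxIntegral.Box.coe_subset_Icc
  have hint : (∫ x in Set.Icc (0 : Fin n → ℝ) 1, f x) = ∫ x in (I₀ : Set (Fin n → ℝ)), f x :=
    (setIntegral_congr_set hcoe).symm
  have hf' : IntegrableOn f (I₀ : Set (Fin n → ℝ)) volume := hf.mono_set hcoe_sub
  have H := hf'.hasBoxIntegral BoxIntegral.IntegrationParams.Henstock rfl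
  rw [BoxIntegral.hasIntegral_iff] at H
  obtain ⟨r, _, Hr⟩ := H ε hε
  refine ⟨fun x => r 0 x, fun x _ => (r 0 x).2, ?_⟩
  intro k a w t hP hfine
  obtain ⟨hw, ht, hdisj, hunion⟩ := hP
  have hlt : ∀ j i, a j i < a j i + w j := fun j i => by linarith [hw j]
  -- the boxes
  set J : Fin k → BoxIntegral.Box (Fin n) := fun j => ⟨a j, fun i => a j i + w j, hlt j⟩ with hJdef
  have hJIcc : ∀ j, BoxIntegral.Box.Icc (J j) = cube (a j) (w j) := fun j => rfl
  have hcube_sub : ∀ j, cube (a j) (w j) ⊆ Set.Icc (0 : Fin n → ℝ) 1 := by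
    intro j; rw [← hunion]; exact Set.subset_iUnion (fun j => cube (a j) (w j)) j
  -- disjointness of half-open boxes
  have hdisj' : ∀ j j', j ≠ j' → Disjoint ((J j : Set (Fin n → ℝ))) ((J j' : Set (Fin n → ℝ))) := by
    intro j j' hne
    rw [Set.disjoint_left]
    rintro x hx hx'
    -- construct a point in both interiors
    set y : Fin n → ℝ := fun i => (max (a j i) (a j' i) + x i) / 2 with hy
    have hIooSub : ∀ (b : Fin n → ℝ) (v : ℝ),
        (Set.pi Set.univ fun i => Set.Ioo (b i) (b i + v)) ⊆ interior (cube b v) :=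
      fun b v => interior_maximal
        (fun z hz => ⟨fun i => le_of_lt (hz i (Set.mem_univ i)).1,
          fun i => le_of_lt (hz i (Set.mem_univ i)).2⟩)
        (isOpen_set_pi Set.finite_univ fun i _ => isOpen_Ioo)
    have hmaxlt : ∀ i, max (a j i) (a j' i) < x i := fun i => max_lt (hx i).1 (hx' i).1
    have hyj : y ∈ interior (cube (a j) (w j)) := by
      refine hIooSub _ _ fun i _ => ?_
      have h1 := hmaxlt i
      have h2 : a j i ≤ max (a j i) (a j' i) := le_max_left _ _
      have h3 : x i ≤ a j i + w j := (hx i).2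
      constructor <;> simp only [hy] <;> linarith
    have hyj' : y ∈ interior (cube (a j') (w j')) := by
      refine hIooSub _ _ fun i _ => ?_
      have h1 := hmaxlt i
      have h2 : a j' i ≤ max (a j i) (a j' i) := le_max_right _ _
      have h3 : x i ≤ a j' i + w j' := (hx' i).2
      constructor <;> simp only [hy] <;> linarith
    have := hdisj j j' hne
    exact absurd (Set.mem_inter hyj hyj') (by rw [this]; exact Set.notMem_empty y)
  have hJinj : Function.Injective J := by
    intro j j' h
    by_contra hne
    have hd := hdisj' j j' hne
    rw [h] at hd
    have hempty : (J j' : Set (Fin n → ℝ)) = ∅ := by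
      simpa using disjoint_self.1 hd
    exact (BoxIntegral.Box.nonempty_coe (J j')).ne_empty hempty
  -- each box ≤ I₀
  have hJle : ∀ j, J j ≤ I₀ := by
    intro j
    rw [BoxIntegral.Box.le_iff_Icc, hJIcc, hIccI₀]
    exact hcube_sub j
  -- membership in J j iff
  have hmemJ : ∀ j (x : Fin n → ℝ), x ∈ (J j : Set (Fin n → ℝ)) ↔
      ∀ i, a j i < x i ∧ x i ≤ a j i + w j := by
    intro j x
    simp [BoxIntegral.Box.mem_coe, BoxIntegral.Box.mem_def, Set.mem_Ioc, forall_and]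
    exact Iff.rfl
  -- covering: every point of I₀ lies in some J j
  have hcover : ∀ x ∈ (I₀ : Set (Fin n → ℝ)), ∃ j, x ∈ (J j : Set (Fin n → ℝ)) := by
    intro x hx
    have hx' : ∀ i, 0 < x i ∧ x i ≤ 1 := fun i => hx i
    -- sequence x - 1/(m+1)
    set xs : ℕ → Fin n → ℝ := fun m i => x i - 1 / (m + 1) with hxs
    have hev : ∀ᶠ m in Filter.atTop, ∃ j, xs m ∈ cube (a j) (w j) := by
      have h1 : ∀ᶠ m : ℕ in Filter.atTop, ∀ i, 1 / ((m : ℝ) + 1) ≤ x i := by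
        rw [Filter.eventually_all]
        intro i
        obtain ⟨M, hM⟩ := exists_nat_one_div_lt (hx' i).1
        filter_upwards [Filter.eventually_ge_atTop M] with m hm
        have h2 : 1 / ((m:ℝ) + 1) ≤ 1 / ((M:ℝ) + 1) := by
          apply one_div_le_one_div_of_le
          · positivity
          · have : (M:ℝ) ≤ (m:ℝ) := Nat.cast_le.2 hm
            linarith
        linarith
      filter_upwards [h1] with m hm
      have : xs m ∈ Set.Icc (0 : Fin n → ℝ) 1 := by
        constructor
        · intro i
          have h0 := hm i
          show (0:ℝ) ≤ x i - 1 / ((m:ℝ) + 1)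
          linarith
        · intro i
          have h2 : (0:ℝ) < 1 / ((m:ℝ) + 1) := by positivity
          have h3 := (hx' i).2
          show x i - 1 / ((m:ℝ) + 1) ≤ (1:ℝ)
          linarith
      rw [← hunion] at this
      exact Set.mem_iUnion.1 this
    have hfreq : ∃ j, ∃ᶠ m in Filter.atTop, xs m ∈ cube (a j) (w j) := by
      by_contra hcon
      push_neg at hcon
      have : ∀ᶠ m in Filter.atTop, ∀ j, xs m ∉ cube (a j) (w j) :=
        Filter.eventually_all.2 hcon
      obtain ⟨m, hm1, hm2⟩ := (hev.and this).exists
      obtain ⟨j, hj⟩ := hm1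
      exact hm2 j hj
    obtain ⟨j, hj⟩ := hfreq
    refine ⟨j, (hmemJ j x).2 fun i => ?_⟩
    constructor
    · obtain ⟨m, hm⟩ := hj.exists
      have h1 : a j i ≤ x i - 1 / ((m:ℝ) + 1) := hm.1 i
      have h2 : (0:ℝ) < 1 / ((m:ℝ) + 1) := by positivity
      linarith
    · by_contra hcon
      push_neg at hcon
      obtain ⟨M, hM⟩ := exists_nat_one_div_lt (sub_pos.2 hcon)
      obtain ⟨m, hmem, hmM⟩ := (hj.and_eventually (Filter.eventually_ge_atTop M)).exists
      have h1 : x i - 1 / ((m:ℝ) + 1) ≤ a j i + w j := hmem.2 i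
      have h2 : 1 / ((m:ℝ) + 1) ≤ 1 / ((M:ℝ) + 1) := by
        apply one_div_le_one_div_of_le
        · positivity
        · have : (M:ℝ) ≤ (m:ℝ) := Nat.cast_le.2 hmM
          linarith
      linarith
  -- build the tagged prepartition
  set tg : BoxIntegral.Box (Fin n) → Fin n → ℝ :=
    fun B => if h : ∃ j, J j = B then t h.choose else 0 with htg
  have htag : ∀ j, tg (J j) = t j := by
    intro j
    have h : ∃ j', J j' = J j := ⟨j, rfl⟩
    rw [htg]
    simp only [dif_pos h]
    exact congrArg t (hJinj h.choose_spec)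
  set π : BoxIntegral.TaggedPrepartition I₀ :=
    { boxes := Finset.univ.image J
      le_of_mem' := by
        intro B hB
        obtain ⟨j, _, rfl⟩ := Finset.mem_image.1 hB
        exact hJle j
      pairwiseDisjoint := by
        rintro B hB B' hB' hne
        simp only [Finset.coe_image, Set.mem_image] at hB hB'
        obtain ⟨j, _, rfl⟩ := hB
        obtain ⟨j', _, rfl⟩ := hB'
        exact hdisj' j j' (fun h => hne (by rw [h]))
      tag := tg
      tag_mem_Icc := by
        intro B
        rw [hIccI₀]
        simp only [htg]
        split_ifs with h
        · exact hcube_sub _ (ht _)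
        · exact ⟨le_refl _, fun i => zero_le_one⟩ } with hπdef
  have hπpart : π.IsPartition := by
    intro x hx
    obtain ⟨j, hj⟩ := hcover x hx
    exact ⟨J j, Finset.mem_image.2 ⟨j, Finset.mem_univ j, rfl⟩, hj⟩
  have hπtag : ∀ j, π.tag (J j) = t j := htag
  have hmem : BoxIntegral.IntegrationParams.MemBaseSet
      BoxIntegral.IntegrationParams.Henstock I₀ 0 (r 0) π := by
    refine ⟨?_, ?_, ?_, ?_⟩
    · -- subordinate
      intro B hB
      obtain ⟨j, _, rfl⟩ := Finset.mem_image.1 hB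
      rw [hπtag j, hJIcc j]
      intro y hy
      rw [Metric.mem_closedBall]
      have hrad : w j ≤ (r 0 (t j) : ℝ) := hfine j
      have hdy : dist y (t j) ≤ w j := by
        refine (dist_pi_le_iff (le_of_lt (hw j))).2 fun i => ?_
        rw [Real.dist_eq, abs_sub_le_iff]
        have h1 : a j i ≤ y i := hy.1 i
        have h2 : y i ≤ a j i + w j := hy.2 i
        have h3 : a j i ≤ t j i := (ht j).1 i
        have h4 : t j i ≤ a j i + w j := (ht j).2 i
        constructor <;> linarith
      exact le_trans hdy hrad
    · -- Henstock
      intro _ B hB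
      obtain ⟨j, _, rfl⟩ := Finset.mem_image.1 hB
      rw [hπtag j, hJIcc j]
      exact ht j
    · intro h; exact absurd h (by norm_num [BoxIntegral.IntegrationParams.Henstock])
    · intro h; exact absurd h (by norm_num [BoxIntegral.IntegrationParams.Henstock])
  have hdist := Hr 0 π hmem hπpart
  -- compute the integral sum
  have hsum : BoxIntegral.integralSum f
      ((volume : Measure (Fin n → ℝ)).toBoxAdditive.toSMul) π
      = ∑ j : Fin k, (w j) ^ n • f (t j) := by
    rw [BoxIntegral.integralSum]
    rw [show π.boxes = Finset.univ.image J from rfl]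
    rw [Finset.sum_image (fun j _ j' _ h => hJinj h)]
    refine Finset.sum_congr rfl fun j _ => ?_
    rw [hπtag j]
    rw [BoxIntegral.BoxAdditiveMap.toSMul_apply, BoxIntegral.Box.volume_apply]
    congr 1
    rw [show (J j).upper = fun i => a j i + w j from rfl, show (J j).lower = a j from rfl]
    simp [Finset.prod_const]
  rw [hsum] at hdist
  rw [hint]
  rw [← dist_eq_norm]
  rw [dist_comm]
  exact hdist

end
end

section
/- Divergence theorem on the unit cube with only Lebesgue-integrable divergence: Let F : [0,1]^n → ℝ^n be continuous on [0,1]^n and differentiable at every point of (0,1)^n, and suppose that div F = Σ_{i=1}^n ∂_i F_i is Lebesgue integrable on (0,1)^n. Then ∫_{(0,1)^n} div F(x) dx = Σ_{i=1}^n [ ∫_{s_i^+} F_i dσ − ∫_{s_i^−} F_i dσ ], where s_i^+ and s_i^− are the faces of [0,1]^n on which x_i = 1 and x_i = 0 respectively, and σ is (n−1)-dimensional Lebesgue (surface) measure on the faces. -/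
open MeasureTheory

noncomputable section

/-- The open unit cube `(0,1)^n`. -/
def openCube (n : ℕ) : Set (Fin n → ℝ) :=
  Set.pi Set.univ fun _ : Fin n => Set.Ioo (0 : ℝ) 1

/-- The face of `[0,1]^n` on which `x i = 1` (`e = true`) resp. `x i = 0` (`e = false`). -/
def unitFace (n : ℕ) (i : Fin n) (e : Bool) : Set (Fin n → ℝ) :=
  {x ∈ Set.Icc (0 : Fin n → ℝ) 1 | x i = if e then 1 else 0}

private lemma insertNth_isometry {m : ℕ} (i : Fin (m + 1)) (c : ℝ) :
    Isometry (fun y : Fin m → ℝ => (i.insertNth c y : Fin (m + 1) → ℝ)) := by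
  have : ∀ y z : Fin m → ℝ,
      dist (i.insertNth c y : Fin (m + 1) → ℝ) (i.insertNth c z) = dist y z := by
    intro y z
    refine le_antisymm ?_ ?_
    · refine (dist_pi_le_iff dist_nonneg).2 fun k => ?_
      rcases eq_or_ne k i with rfl | hk
      · simp [dist_nonneg]
      · rcases Fin.exists_succAbove_eq hk with ⟨j, rfl⟩
        simpa using dist_le_pi_dist y z j
    · refine (dist_pi_le_iff dist_nonneg).2 fun j => ?_
      simpa using dist_le_pi_dist (i.insertNth c y : Fin (m + 1) → ℝ) (i.insertNth c z) (i.succAbove j)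
  exact Isometry.of_dist_eq this

private lemma unitFace_eq_image {m : ℕ} (i : Fin (m + 1)) (e : Bool) :
    unitFace (m + 1) i e =
      (fun y : Fin m → ℝ => i.insertNth (if e then (1 : ℝ) else 0) y) '' Set.Icc 0 1 := by
  ext x
  constructor
  · rintro ⟨hx, hxi⟩
    refine ⟨i.removeNth x, ⟨fun j => hx.1 (i.succAbove j), fun j => hx.2 (i.succAbove j)⟩, ?_⟩
    rw [← hxi]
    exact Fin.insertNth_self_removeNth i x
  · rintro ⟨y, hy, rfl⟩
    refine ⟨⟨fun k => ?_, fun k => ?_⟩, by simp⟩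
    · rcases eq_or_ne k i with rfl | hk
      · simp; cases e <;> norm_num
      · rcases Fin.exists_succAbove_eq hk with ⟨j, rfl⟩
        simpa using hy.1 j
    · rcases eq_or_ne k i with rfl | hk
      · simp; cases e <;> norm_num
      · rcases Fin.exists_succAbove_eq hk with ⟨j, rfl⟩
        simpa using hy.2 j

private lemma hausdorff_eq_volume {m : ℕ} :
    (μH[(m + 1 - 1 : ℕ)] : Measure (Fin m → ℝ)) = volume := by
  simpa using hausdorffMeasure_pi_real (ι := Fin m)

private lemma face_integral {m : ℕ} (i : Fin (m + 1)) (e : Bool)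
    (g : (Fin (m + 1) → ℝ) → ℝ) :
    (∫ x in unitFace (m + 1) i e, g x ∂(μH[(m + 1 - 1 : ℕ)] : Measure (Fin (m + 1) → ℝ))) =
      ∫ y in Set.Icc (0 : Fin m → ℝ) 1, g (i.insertNth (if e then (1 : ℝ) else 0) y) := by
  set c : ℝ := if e then 1 else 0 with hc
  set φ : (Fin m → ℝ) → (Fin (m + 1) → ℝ) := fun y => i.insertNth c y with hφ
  have hiso : Isometry φ := insertNth_isometry i c
  have hemb : MeasurableEmbedding φ := hiso.isClosedEmbedding.measurableEmbedding
  have hmap : Measure.map φ (μH[(m + 1 - 1 : ℕ)]) =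
      (μH[(m + 1 - 1 : ℕ)] : Measure (Fin (m + 1) → ℝ)).restrict (Set.range φ) :=
    hiso.map_hausdorffMeasure (Or.inl (by positivity))
  have himg : MeasurableSet (φ '' Set.Icc 0 1) :=
    (isCompact_Icc.image hiso.continuous).measurableSet
  rw [unitFace_eq_image, ← hc, ← hφ]
  have h1 : (∫ x in φ '' Set.Icc 0 1, g x ∂(μH[(m + 1 - 1 : ℕ)] : Measure (Fin (m + 1) → ℝ))) =
      ∫ x in φ '' Set.Icc 0 1, g x ∂(Measure.map φ (μH[(m + 1 - 1 : ℕ)])) := by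
    rw [hmap, Measure.restrict_restrict himg,
      Set.inter_eq_self_of_subset_left (Set.image_subset_range _ _)]
  rw [h1, hemb.setIntegral_map, hemb.injective.preimage_image, hausdorff_eq_volume]

/-- **Divergence theorem on the unit cube with only Lebesgue-integrable divergence**:
if `F : [0,1]^n → ℝ^n` is continuous on `[0,1]^n`, differentiable at every point of
`(0,1)^n`, and `div F = ∑ i, ∂ᵢFᵢ` is Lebesgue integrable on `(0,1)^n`, then
`∫_{(0,1)^n} div F = ∑ i [∫_{sᵢ⁺} Fᵢ dσ − ∫_{sᵢ⁻} Fᵢ dσ]`, with `σ` the `(n-1)`-dimensional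
(Hausdorff) surface measure on the faces. -/
theorem divergence_theorem_unit_cube
    {n : ℕ} (F : (Fin n → ℝ) → (Fin n → ℝ))
    (hFc : ContinuousOn F (Set.Icc 0 1))
    (hFd : ∀ x ∈ openCube n, DifferentiableAt ℝ F x)
    (hInt : IntegrableOn (fun x => ∑ i : Fin n, fderiv ℝ F x (Pi.single i 1) i)
      (openCube n) volume) :
    ∫ x in openCube n, (∑ i : Fin n, fderiv ℝ F x (Pi.single i 1) i) =
      ∑ i : Fin n,
        ((∫ x in unitFace n i true, F x i ∂μH[(n - 1 : ℕ)]) -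
          ∫ x in unitFace n i false, F x i ∂μH[(n - 1 : ℕ)]) := by
  cases n with
  | zero => simp
  | succ m =>
    have hae : openCube (m + 1) =ᵐ[volume] Set.Icc (0 : Fin (m + 1) → ℝ) 1 := by
      rw [show (volume : Measure (Fin (m + 1) → ℝ)) = Measure.pi fun _ => volume from rfl]
      exact Measure.univ_pi_Ioo_ae_eq_Icc
    have hle : (0 : Fin (m + 1) → ℝ) ≤ 1 := fun _ => zero_le_one
    have key := integral_divergence_of_hasFDerivAt_off_countable
      (0 : Fin (m + 1) → ℝ) 1 hle F (fun x => fderiv ℝ F x) ∅ Set.countable_empty hFc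
      (fun x hx => (hFd x hx.1).hasFDerivAt)
      (hInt.congr_set_ae hae.symm)
    rw [setIntegral_congr_set hae, key]
    refine Finset.sum_congr rfl fun i _ => ?_
    rw [face_integral i true, face_integral i false]
    norm_num

end
end
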